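/- (Bernoulli empirical-average machine.) Let Z = {0,1}, let P be the Bernoulli pmf with P(1) = φ for φ ∈ [0,1], let m ≥ 1, and let the learning machine deterministically output the empirical average H = (1/m)∑_{i=1}^m S_i of the training set S ∈ {0,1}^m. Then the mutual affinity between a uniformly drawn training example Z_trn and H equals the mean deviation of the binomial distribution: I_P(Z_trn, H) = ∑_{k=0}^{m} C(m,k) · φ^k · (1−φ)^{m−k} · |φ − k/m|. Moreover, if m is even and φ = 1/2, this value equals m! / ( ((m/2)!)² · 2^{m+1} ). -/

import Mathlib

/-- Total variation distance between two pmfs: `1 - ∑ min`. -/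
noncomputable def tv {A : Type*} (p q : A → ℝ) : ℝ := 1 - ∑' a, min (p a) (q a)

/-- `p` is a probability mass function: nonnegative and summing to `1`. -/
def IsPMF {A : Type*} (p : A → ℝ) : Prop := (∀ a, 0 ≤ p a) ∧ HasSum p 1

/-- Product pmf `P^{⊗m}` of `m` i.i.d. draws from `P`. -/
noncomputable def prodPMF {Z : Type*} (m : ℕ) (P : Z → ℝ) (S : Fin m → Z) : ℝ :=
  ∏ i, P (S i)

/-- Joint pmf of a uniformly drawn training example `Z_trn` and the inferred
hypothesis `H`: `μ(z,h) = ∑_S P^{⊗m}(S) · (1/m)∑_i 1{S_i = z} · Q(h|S)`. -/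
noncomputable def jointZH {Z H : Type*} (m : ℕ) (P : Z → ℝ)
    (Q : (Fin m → Z) → H → ℝ) (z : Z) (h : H) : ℝ :=
  haveI := Classical.decEq Z
  ∑' S : Fin m → Z,
    prodPMF m P S * ((1 / (m : ℝ)) * ∑ i, if S i = z then (1 : ℝ) else 0) * Q S h

/-- Marginal of `Z_trn` under the joint pmf `jointZH`. -/
noncomputable def margZ {Z H : Type*} (m : ℕ) (P : Z → ℝ)
    (Q : (Fin m → Z) → H → ℝ) (z : Z) : ℝ :=
  ∑' h : H, jointZH m P Q z h

/-- Marginal of the hypothesis `H` under the joint pmf `jointZH`. -/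
noncomputable def margH {Z H : Type*} (m : ℕ) (P : Z → ℝ)
    (Q : (Fin m → Z) → H → ℝ) (h : H) : ℝ :=
  ∑' z : Z, jointZH m P Q z h

/-- Mutual affinity `I(Z_trn, H) = ‖μ_Z ⊗ μ_H, μ‖`. -/
noncomputable def affinity {Z H : Type*} (m : ℕ) (P : Z → ℝ)
    (Q : (Fin m → Z) → H → ℝ) : ℝ :=
  tv (fun p : Z × H => margZ m P Q p.1 * margH m P Q p.2)
    (fun p : Z × H => jointZH m P Q p.1 p.2)

/-- True risk `R(𝓛) = ∑_S P^{⊗m}(S) ∑_h Q(h|S) ∑_z P(z)·L(h,z)`. -/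
noncomputable def trueRisk {Z H : Type*} (m : ℕ) (P : Z → ℝ)
    (Q : (Fin m → Z) → H → ℝ) (L : H → Z → ℝ) : ℝ :=
  ∑' S : Fin m → Z, prodPMF m P S * ∑' h : H, Q S h * ∑' z : Z, P z * L h z

/-- Empirical risk `R_emp(𝓛) = ∑_S P^{⊗m}(S) ∑_h Q(h|S)·(1/m)∑_i L(h,S_i)`. -/
noncomputable def empRisk {Z H : Type*} (m : ℕ) (P : Z → ℝ)
    (Q : (Fin m → Z) → H → ℝ) (L : H → Z → ℝ) : ℝ :=
  ∑' S : Fin m → Z, prodPMF m P S * ∑' h : H, Q S h * ((1 / (m : ℝ)) * ∑ i, L h (S i))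

/-- Learning capacity `C^(m)(𝓛) = sup_P I(Z_trn, H)`. -/
noncomputable def capacity {Z H : Type*} (m : ℕ)
    (Q : (Fin m → Z) → H → ℝ) : ℝ :=
  sSup {c : ℝ | ∃ P : Z → ℝ, IsPMF P ∧ c = affinity m P Q}

section helper
open Finset


-- binomial theorem forms
private lemma B0 (m : ℕ) (a b : ℝ) :
    ∑ k ∈ range (m+1), (m.choose k : ℝ) * a^k * b^(m-k) = (a+b)^m := by
  rw [add_pow]
  exact Finset.sum_congr rfl (fun k _ => by ring)

private lemma B1 (m : ℕ) (hm : 1 ≤ m) (a b : ℝ) :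
    ∑ k ∈ range (m+1), (k:ℝ) * (m.choose k : ℝ) * a^k * b^(m-k)
      = m * a * (a+b)^(m-1) := by
  rw [Finset.sum_range_succ']
  have h1 : ∀ j, ((m.choose (j+1) * (j+1) : ℕ) : ℝ) = (m * (m-1).choose j : ℕ) := by
    intro j
    congr 1
    have := Nat.add_one_mul_choose_eq (m-1) j
    rw [Nat.sub_add_cancel hm] at this
    omega
  have h2 : ∀ j, m - (j+1) = (m-1) - j := fun j => by omega
  have : ∑ j ∈ range m, ((j:ℝ)+1) * (m.choose (j+1) : ℝ) * a^(j+1) * b^(m-(j+1))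
      = m * a * ∑ j ∈ range m, ((m-1).choose j : ℝ) * a^j * b^((m-1)-j) := by
    rw [Finset.mul_sum]
    refine Finset.sum_congr rfl (fun j _ => ?_)
    have := h1 j
    push_cast at this
    rw [h2 j, pow_succ]
    linear_combination (a^j * a * b^((m-1)-j)) * this
  simp only [Nat.cast_add, Nat.cast_one, Nat.cast_zero, zero_mul, add_zero] at *
  rw [this]
  have : range m = range ((m-1)+1) := by congr 1; omega
  rw [this, B0]

private lemma fin2_cases (x : Fin 2) : x = 0 ∨ x = 1 := by omega

private lemma cnt_le {m : ℕ} (S : Fin m → Fin 2) : ∑ i, ((S i : ℕ)) ≤ m := by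
  calc ∑ i, ((S i : ℕ)) ≤ ∑ _i : Fin m, 1 :=
        Finset.sum_le_sum (fun i _ => by omega)
    _ = m := by simp

-- the binomial mass
private lemma nu_eq (m k : ℕ) (φ : ℝ) (P : Fin 2 → ℝ) (hP1 : P 1 = φ) (hP0 : P 0 = 1 - φ) :
    ∑ S : Fin m → Fin 2, (if (∑ i, ((S i : ℕ))) = k then ∏ i, P (S i) else 0)
      = (m.choose k : ℝ) * φ^k * (1-φ)^(m-k) := by
  classical
  have hsum : ∀ S : Fin m → Fin 2, ∑ i, ((S i : ℕ)) = (univ.filter (fun i => S i = 1)).card := by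
    intro S
    rw [Finset.card_filter]
    refine Finset.sum_congr rfl (fun i _ => ?_)
    rcases fin2_cases (S i) with h | h <;> simp [h]
  have hprod : ∀ S : Fin m → Fin 2, ∏ i, P (S i)
      = φ ^ (univ.filter (fun i => S i = 1)).card
        * (1-φ) ^ (m - (univ.filter (fun i => S i = 1)).card) := by
    intro S
    have : ∏ i, P (S i) = ∏ i, (if S i = 1 then φ else (1-φ)) := by
      refine Finset.prod_congr rfl (fun i _ => ?_)
      rcases fin2_cases (S i) with h | h <;> simp [h, hP0, hP1]
    rw [this, Finset.prod_ite, Finset.prod_const, Finset.prod_const]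
    congr 1
    rw [Finset.filter_not, Finset.card_sdiff_of_subset (Finset.filter_subset _ _)]
    simp
  have key : ∑ S : Fin m → Fin 2, (if (∑ i, ((S i : ℕ))) = k then ∏ i, P (S i) else 0)
      = ∑ t : Finset (Fin m), (if t.card = k then φ^t.card * (1-φ)^(m-t.card) else 0) := by
    refine Finset.sum_bij' (fun S _ => univ.filter (fun i => S i = 1))
      (fun t _ => fun i => if i ∈ t then 1 else 0) (fun _ _ => Finset.mem_univ _)
      (fun _ _ => Finset.mem_univ _) ?_ ?_ ?_
    · intro S _
      funext i
      by_cases h : S i = 1 <;> rcases fin2_cases (S i) with h' | h' <;> simp_all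
    · intro t _
      ext i
      simp only [Finset.mem_filter, Finset.mem_univ, true_and]
      by_cases h : i ∈ t <;> simp [h]
    · intro S _
      rw [hsum S, hprod S]
  rw [key, ← Finset.sum_filter]
  have hset : (univ : Finset (Finset (Fin m))).filter (fun t => t.card = k)
      = Finset.powersetCard k univ := by
    rw [Finset.powersetCard_eq_filter, Finset.powerset_univ]
  rw [hset]
  have : ∀ t ∈ Finset.powersetCard k (univ : Finset (Fin m)),
      φ^t.card * (1-φ)^(m-t.card) = φ^k * (1-φ)^(m-k) := by
    intro t ht
    rw [(Finset.mem_powersetCard.1 ht).2]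
  rw [Finset.sum_congr rfl this, Finset.sum_const, Finset.card_powersetCard]
  simp [mul_assoc]

private lemma minadd (a b : ℝ) : min a b + min (1-a) (1-b) = 1 - |a - b| := by
  rcases le_total a b with h | h
  · rw [min_eq_left h, min_eq_right (by linarith), abs_of_nonpos (by linarith)]
    ring
  · rw [min_eq_right h, min_eq_left (by linarith), abs_of_nonneg (by linarith)]
    ring

end helper

section main
open Finset


variable {m : ℕ} {φ : ℝ} {P : Fin 2 → ℝ} {Q : (Fin m → Fin 2) → ℝ → ℝ}

private lemma joint_norm
    (hQ : ∀ S h, Q S h = if h = (1 / (m : ℝ)) * ∑ i, ((S i : ℕ) : ℝ) then 1 else 0)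
    (z : Fin 2) (h : ℝ) :
    jointZH m P Q z h = ∑ S : Fin m → Fin 2,
      (∏ i, P (S i)) * ((1/(m:ℝ)) * ∑ i, if S i = z then (1:ℝ) else 0)
        * (if h = (1/(m:ℝ)) * ∑ i, ((S i : ℕ):ℝ) then 1 else 0) := by
  rw [jointZH, tsum_fintype]
  refine Finset.sum_congr rfl (fun S _ => ?_)
  rw [hQ]
  congr 2
  congr 1
  exact Finset.sum_congr rfl (fun i _ => by by_cases hi : S i = z <;> simp [hi])

private lemma hcond (hm : 1 ≤ m) (S : Fin m → Fin 2) (k : ℕ) :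
    ((k:ℝ)/m = (1/(m:ℝ)) * ∑ i, ((S i : ℕ):ℝ)) ↔ (∑ i, ((S i : ℕ))) = k := by
  have hm0 : (m:ℝ) ≠ 0 := Nat.cast_ne_zero.2 (by omega)
  have hc : (1/(m:ℝ)) * ∑ i, ((S i : ℕ):ℝ) = ((∑ i, ((S i : ℕ)) : ℕ):ℝ) / m := by
    push_cast
    ring
  rw [hc, div_eq_div_iff hm0 hm0, mul_left_inj' hm0]
  exact ⟨fun h => Nat.cast_injective h.symm, fun h => by rw [h]⟩

private lemma joint_one (hm : 1 ≤ m) (hP1 : P 1 = φ) (hP0 : P 0 = 1 - φ)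
    (hQ : ∀ S h, Q S h = if h = (1 / (m : ℝ)) * ∑ i, ((S i : ℕ) : ℝ) then 1 else 0)
    (k : ℕ) :
    jointZH m P Q 1 ((k:ℝ)/m)
      = (k:ℝ)/m * ((m.choose k : ℝ) * φ^k * (1-φ)^(m-k)) := by
  rw [joint_norm hQ, ← nu_eq m k φ P hP1 hP0, Finset.mul_sum]
  refine Finset.sum_congr rfl (fun S _ => ?_)
  by_cases hc : (∑ i, ((S i : ℕ))) = k
  · rw [if_pos ((hcond hm S k).2 hc), if_pos hc]
    have hw : ∑ i, (if S i = 1 then (1:ℝ) else 0) = (k:ℝ) := by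
      have : ∑ i, (if S i = 1 then (1:ℝ) else 0) = ∑ i, ((S i : ℕ):ℝ) := by
        refine Finset.sum_congr rfl (fun i _ => ?_)
        rcases fin2_cases (S i) with h | h <;> simp [h]
      rw [this, ← Nat.cast_sum, hc]
    rw [hw]
    ring
  · rw [if_neg (fun hh => hc ((hcond hm S k).1 hh)), if_neg hc]
    ring

private lemma joint_zero (hm : 1 ≤ m) (hP1 : P 1 = φ) (hP0 : P 0 = 1 - φ)
    (hQ : ∀ S h, Q S h = if h = (1 / (m : ℝ)) * ∑ i, ((S i : ℕ) : ℝ) then 1 else 0)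
    (k : ℕ) :
    jointZH m P Q 0 ((k:ℝ)/m)
      = ((m:ℝ)-k)/m * ((m.choose k : ℝ) * φ^k * (1-φ)^(m-k)) := by
  rw [joint_norm hQ, ← nu_eq m k φ P hP1 hP0, Finset.mul_sum]
  refine Finset.sum_congr rfl (fun S _ => ?_)
  by_cases hc : (∑ i, ((S i : ℕ))) = k
  · rw [if_pos ((hcond hm S k).2 hc), if_pos hc]
    have hw : ∑ i, (if S i = 0 then (1:ℝ) else 0) = (m:ℝ) - k := by
      have : ∑ i, (if S i = 0 then (1:ℝ) else 0) = ∑ i, (1 - ((S i : ℕ):ℝ)) := by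
        refine Finset.sum_congr rfl (fun i _ => ?_)
        rcases fin2_cases (S i) with h | h <;> simp [h]
      rw [this, Finset.sum_sub_distrib, ← Nat.cast_sum, hc]
      simp
    rw [hw]
    ring
  · rw [if_neg (fun hh => hc ((hcond hm S k).1 hh)), if_neg hc]
    ring

private lemma joint_off (hm : 1 ≤ m)
    (hQ : ∀ S h, Q S h = if h = (1 / (m : ℝ)) * ∑ i, ((S i : ℕ) : ℝ) then 1 else 0)
    (z : Fin 2) (h : ℝ)
    (hh : ∀ k ∈ range (m+1), h ≠ (k:ℝ)/m) :
    jointZH m P Q z h = 0 := by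
  rw [joint_norm hQ]
  refine Finset.sum_eq_zero (fun S _ => ?_)
  have : ¬ (h = (1/(m:ℝ)) * ∑ i, ((S i : ℕ):ℝ)) := by
    intro e
    refine hh (∑ i, ((S i : ℕ))) (Finset.mem_range.2 (by have := cnt_le S; omega)) ?_
    rw [e]
    push_cast
    ring
  rw [if_neg this, mul_zero]


private lemma hDinj (hm : 1 ≤ m) : ∀ x ∈ range (m+1), ∀ y ∈ range (m+1),
    (x:ℝ)/m = (y:ℝ)/m → x = y := by
  intro x _ y _ hxy
  have hm0 : (m:ℝ) ≠ 0 := Nat.cast_ne_zero.2 (by omega)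
  field_simp at hxy
  exact_mod_cast hxy

private lemma margH_val (hm : 1 ≤ m) (hP1 : P 1 = φ) (hP0 : P 0 = 1 - φ)
    (hQ : ∀ S h, Q S h = if h = (1 / (m : ℝ)) * ∑ i, ((S i : ℕ) : ℝ) then 1 else 0)
    (k : ℕ) :
    margH m P Q ((k:ℝ)/m) = (m.choose k : ℝ) * φ^k * (1-φ)^(m-k) := by
  have hm0 : (m:ℝ) ≠ 0 := Nat.cast_ne_zero.2 (by omega)
  rw [margH, tsum_fintype, Fin.sum_univ_two, joint_zero hm hP1 hP0 hQ k,
    joint_one hm hP1 hP0 hQ k]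
  field_simp
  ring

private lemma margH_off (hm : 1 ≤ m)
    (hQ : ∀ S h, Q S h = if h = (1 / (m : ℝ)) * ∑ i, ((S i : ℕ) : ℝ) then 1 else 0)
    (h : ℝ) (hh : ∀ k ∈ range (m+1), h ≠ (k:ℝ)/m) :
    margH m P Q h = 0 := by
  rw [margH, tsum_fintype, Fin.sum_univ_two, joint_off hm hQ 0 h hh,
    joint_off hm hQ 1 h hh, add_zero]

private lemma sum_km (hm : 1 ≤ m) (hφ0 : 0 ≤ φ) :
    ∑ k ∈ range (m+1), (k:ℝ)/m * ((m.choose k : ℝ) * φ^k * (1-φ)^(m-k)) = φ := by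
  have hm0 : (m:ℝ) ≠ 0 := Nat.cast_ne_zero.2 (by omega)
  have h1 : ∑ k ∈ range (m+1), (k:ℝ)/m * ((m.choose k : ℝ) * φ^k * (1-φ)^(m-k))
      = (1/m) * ∑ k ∈ range (m+1), (k:ℝ) * (m.choose k : ℝ) * φ^k * (1-φ)^(m-k) := by
    rw [Finset.mul_sum]
    exact Finset.sum_congr rfl (fun k _ => by ring)
  have h2 := B1 m hm φ (1-φ)
  have e : φ + (1-φ) = 1 := by ring
  rw [e, one_pow] at h2
  rw [h1, h2]
  field_simp

private lemma sum_nu (hm : 1 ≤ m) :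
    ∑ k ∈ range (m+1), (m.choose k : ℝ) * φ^k * (1-φ)^(m-k) = 1 := by
  have h2 := B0 m φ (1-φ)
  have e : φ + (1-φ) = 1 := by ring
  rw [e, one_pow] at h2
  exact h2

private lemma margZ_one (hm : 1 ≤ m) (hφ0 : 0 ≤ φ) (hP1 : P 1 = φ) (hP0 : P 0 = 1 - φ)
    (hQ : ∀ S h, Q S h = if h = (1 / (m : ℝ)) * ∑ i, ((S i : ℕ) : ℝ) then 1 else 0) :
    margZ m P Q 1 = φ := by
  rw [margZ, tsum_eq_sum (s := (range (m+1)).image (fun k : ℕ => (k:ℝ)/m))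
    (fun h hh => joint_off hm hQ 1 h
      (fun k hk e => hh (Finset.mem_image.2 ⟨k, hk, e.symm⟩))),
    Finset.sum_image (hDinj hm)]
  rw [Finset.sum_congr rfl (fun k _ => joint_one hm hP1 hP0 hQ k)]
  exact sum_km hm hφ0

private lemma margZ_zero (hm : 1 ≤ m) (hφ0 : 0 ≤ φ) (hP1 : P 1 = φ) (hP0 : P 0 = 1 - φ)
    (hQ : ∀ S h, Q S h = if h = (1 / (m : ℝ)) * ∑ i, ((S i : ℕ) : ℝ) then 1 else 0) :
    margZ m P Q 0 = 1 - φ := by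
  have hm0 : (m:ℝ) ≠ 0 := Nat.cast_ne_zero.2 (by omega)
  rw [margZ, tsum_eq_sum (s := (range (m+1)).image (fun k : ℕ => (k:ℝ)/m))
    (fun h hh => joint_off hm hQ 0 h
      (fun k hk e => hh (Finset.mem_image.2 ⟨k, hk, e.symm⟩))),
    Finset.sum_image (hDinj hm)]
  rw [Finset.sum_congr rfl (fun k _ => joint_zero hm hP1 hP0 hQ k)]
  have split : ∀ k : ℕ, ((m:ℝ)-k)/m * ((m.choose k : ℝ) * φ^k * (1-φ)^(m-k))
      = (m.choose k : ℝ) * φ^k * (1-φ)^(m-k)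
        - (k:ℝ)/m * ((m.choose k : ℝ) * φ^k * (1-φ)^(m-k)) := by
    intro k
    field_simp
  rw [Finset.sum_congr rfl (fun k _ => split k), Finset.sum_sub_distrib,
    sum_nu hm, sum_km hm hφ0]

private lemma affinity_eq (hm : 1 ≤ m) (hφ0 : 0 ≤ φ) (hφ1 : φ ≤ 1)
    (hP1 : P 1 = φ) (hP0 : P 0 = 1 - φ)
    (hQ : ∀ S h, Q S h = if h = (1 / (m : ℝ)) * ∑ i, ((S i : ℕ) : ℝ) then 1 else 0) :
    affinity m P Q = ∑ k ∈ range (m + 1),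
      (m.choose k : ℝ) * φ ^ k * (1 - φ) ^ (m - k) * |φ - (k : ℝ) / (m : ℝ)| := by
  classical
  have hm0 : (m:ℝ) ≠ 0 := Nat.cast_ne_zero.2 (by omega)
  set D : Finset ℝ := (range (m+1)).image (fun k : ℕ => (k:ℝ)/m) with hD
  have hν : ∀ k : ℕ, 0 ≤ (m.choose k : ℝ) * φ^k * (1-φ)^(m-k) := by
    intro k
    have : (0:ℝ) ≤ 1 - φ := by linarith
    positivity
  rw [affinity, tv]
  have hvan : ∀ p : Fin 2 × ℝ, p ∉ ((univ : Finset (Fin 2)) ×ˢ D) →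
      min (margZ m P Q p.1 * margH m P Q p.2) (jointZH m P Q p.1 p.2) = 0 := by
    intro p hp
    have hp2 : p.2 ∉ D := by
      simp only [Finset.mem_product, Finset.mem_univ, true_and] at hp
      exact hp
    have hh : ∀ k ∈ range (m+1), p.2 ≠ (k:ℝ)/m :=
      fun k hk e => hp2 (Finset.mem_image.2 ⟨k, hk, e.symm⟩)
    rw [margH_off hm hQ p.2 hh, joint_off hm hQ p.1 p.2 hh, mul_zero, min_self]
  rw [tsum_eq_sum hvan, Finset.sum_product, Fin.sum_univ_two]
  rw [hD, Finset.sum_image (hDinj hm), Finset.sum_image (hDinj hm)]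
  have hA : ∑ k ∈ range (m+1),
      min (margZ m P Q 0 * margH m P Q ((k:ℝ)/m)) (jointZH m P Q 0 ((k:ℝ)/m))
      = ∑ k ∈ range (m+1), min (1-φ) (1-(k:ℝ)/m)
          * ((m.choose k : ℝ) * φ^k * (1-φ)^(m-k)) := by
    refine Finset.sum_congr rfl (fun k _ => ?_)
    rw [margZ_zero hm hφ0 hP1 hP0 hQ, margH_val hm hP1 hP0 hQ,
      joint_zero hm hP1 hP0 hQ, min_mul_of_nonneg _ _ (hν k)]
    congr 2
    field_simp
  have hB : ∑ k ∈ range (m+1),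
      min (margZ m P Q 1 * margH m P Q ((k:ℝ)/m)) (jointZH m P Q 1 ((k:ℝ)/m))
      = ∑ k ∈ range (m+1), min φ ((k:ℝ)/m)
          * ((m.choose k : ℝ) * φ^k * (1-φ)^(m-k)) := by
    refine Finset.sum_congr rfl (fun k _ => ?_)
    rw [margZ_one hm hφ0 hP1 hP0 hQ, margH_val hm hP1 hP0 hQ,
      joint_one hm hP1 hP0 hQ, min_mul_of_nonneg _ _ (hν k)]
  rw [hA, hB, ← Finset.sum_add_distrib]
  have hmin : ∀ k : ℕ,
      min (1-φ) (1-(k:ℝ)/m) * ((m.choose k : ℝ) * φ^k * (1-φ)^(m-k))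
        + min φ ((k:ℝ)/m) * ((m.choose k : ℝ) * φ^k * (1-φ)^(m-k))
      = (m.choose k : ℝ) * φ^k * (1-φ)^(m-k)
        - (m.choose k : ℝ) * φ^k * (1-φ)^(m-k) * |φ - (k:ℝ)/m| := by
    intro k
    have := minadd φ ((k:ℝ)/m)
    linear_combination ((m.choose k:ℝ)*φ^k*(1-φ)^(m-k)) * this
  rw [Finset.sum_congr rfl (fun k _ => hmin k), Finset.sum_sub_distrib, sum_nu hm]
  ring

private lemma P2b (n : ℕ) :
    ∑ k ∈ range n, ((2*n).choose k : ℝ) * ((n:ℝ) - k)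
      = n * ((2*n).choose n : ℝ) / 2 := by
  have key : ∀ k ∈ range n,
      ((2*n).choose k : ℝ) * ((n:ℝ) - k)
      = ((k:ℝ)+1) * ((2*n).choose (k+1) : ℝ) / 2 - (k:ℝ) * ((2*n).choose k : ℝ) / 2 := by
    intro k hk
    have hk' : k < n := Finset.mem_range.1 hk
    have h := Nat.choose_succ_right_eq (2*n) k
    have hcast : ((2*n - k : ℕ) : ℝ) = 2*(n:ℝ) - k := by
      have : k ≤ 2*n := by omega
      push_cast [this]
      ring
    have h2 : ((2*n).choose (k+1) : ℝ) * ((k:ℝ)+1) = ((2*n).choose k : ℝ) * (2*(n:ℝ) - k) := by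
      have := congrArg (fun x : ℕ => (x : ℝ)) h
      push_cast at this
      rw [hcast] at this
      linear_combination this
    linear_combination -h2 / 2
  rw [Finset.sum_congr rfl key]
  have := Finset.sum_range_sub (f := fun k => (k:ℝ) * ((2*n).choose k : ℝ) / 2) n
  push_cast at this
  rw [this]
  simp

private lemma P2c (n : ℕ) (hn : 1 ≤ n) :
    ∑ k ∈ range (2*n+1), ((2*n).choose k : ℝ) * |(n:ℝ) - k|
      = n * ((2*n).choose n : ℝ) := by
  have habs : ∀ x : ℝ, |x| = 2 * max x 0 - x := by
    intro x
    rcases le_total x 0 with h | h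
    · rw [abs_of_nonpos h, max_eq_right h]; ring
    · rw [abs_of_nonneg h, max_eq_left h]; ring
  have hsplit : ∑ k ∈ range (2*n+1), ((2*n).choose k : ℝ) * |(n:ℝ) - k|
      = 2 * ∑ k ∈ range (2*n+1), ((2*n).choose k : ℝ) * max ((n:ℝ) - k) 0
        - ∑ k ∈ range (2*n+1), ((2*n).choose k : ℝ) * ((n:ℝ) - k) := by
    rw [Finset.mul_sum, ← Finset.sum_sub_distrib]
    exact Finset.sum_congr rfl (fun k _ => by rw [habs]; ring)
  have hC : ∑ k ∈ range (2*n+1), ((2*n).choose k : ℝ) = 2^(2*n) := by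
    have := B0 (2*n) 1 1
    norm_num at this
    exact this
  have hkC : ∑ k ∈ range (2*n+1), (k:ℝ) * ((2*n).choose k : ℝ) = 2*n * 2^(2*n-1) := by
    have := B1 (2*n) (by omega) 1 1
    norm_num at this
    exact this
  have hzero : ∑ k ∈ range (2*n+1), ((2*n).choose k : ℝ) * ((n:ℝ) - k) = 0 := by
    have e : ∀ k : ℕ, ((2*n).choose k : ℝ) * ((n:ℝ) - k)
        = (n:ℝ) * ((2*n).choose k : ℝ) - (k:ℝ) * ((2*n).choose k : ℝ) := fun k => by ring
    rw [Finset.sum_congr rfl (fun k _ => e k), Finset.sum_sub_distrib, ← Finset.mul_sum,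
      hC, hkC]
    have h2 : (2:ℝ)^(2*n) = 2 * 2^(2*n-1) := by
      rw [← pow_succ']
      congr 1
      omega
    rw [h2]
    ring
  have hmax : ∑ k ∈ range (2*n+1), ((2*n).choose k : ℝ) * max ((n:ℝ) - k) 0
      = ∑ k ∈ range n, ((2*n).choose k : ℝ) * ((n:ℝ) - k) := by
    rw [Finset.range_eq_Ico, ← Finset.sum_Ico_consecutive _ (Nat.zero_le n)
      (by omega : n ≤ 2*n+1)]
    have h1 : ∑ k ∈ Finset.Ico n (2*n+1), ((2*n).choose k : ℝ) * max ((n:ℝ) - k) 0 = 0 := by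
      refine Finset.sum_eq_zero (fun k hk => ?_)
      have : n ≤ k := (Finset.mem_Ico.1 hk).1
      rw [max_eq_right (by simp; exact_mod_cast this), mul_zero]
    rw [h1, add_zero, ← Finset.range_eq_Ico]
    refine Finset.sum_congr rfl (fun k hk => ?_)
    have : k < n := Finset.mem_range.1 hk
    rw [max_eq_left (by simp; exact_mod_cast this.le)]
  rw [hsplit, hzero, hmax, P2b n]
  ring

end main

/-- Bernoulli empirical-average machine: for observations in
`{0,1}` with `P(1) = φ` and the machine that deterministically outputs the
empirical average of the training set, the mutual affinity equals the mean
deviation of the binomial distribution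
`∑_{k=0}^m C(m,k) φ^k (1-φ)^{m-k} |φ - k/m|`; moreover, if `m` is even and
`φ = 1/2`, this value equals `m!/(((m/2)!)²·2^{m+1})`. -/
theorem stmt19 (m : ℕ) (hm : 1 ≤ m) (φ : ℝ) (hφ0 : 0 ≤ φ) (hφ1 : φ ≤ 1)
    (P : Fin 2 → ℝ) (hP1 : P 1 = φ) (hP0 : P 0 = 1 - φ)
    (Q : (Fin m → Fin 2) → ℝ → ℝ)
    (hQ : ∀ S h, Q S h =
      if h = (1 / (m : ℝ)) * ∑ i, ((S i : ℕ) : ℝ) then 1 else 0) :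
    affinity m P Q = (∑ k ∈ Finset.range (m + 1),
        (m.choose k : ℝ) * φ ^ k * (1 - φ) ^ (m - k) * |φ - (k : ℝ) / (m : ℝ)|) ∧
      (Even m → φ = 1 / 2 →
        affinity m P Q =
          (m.factorial : ℝ) / (((m / 2).factorial : ℝ) ^ 2 * 2 ^ (m + 1))) := by
  have h1 := affinity_eq hm hφ0 hφ1 hP1 hP0 hQ
  refine ⟨h1, fun hEven hφ => ?_⟩
  subst hφ
  rw [h1]
  set n := m / 2 with hn
  have hn2 : m = 2 * n := by
    obtain ⟨r, hr⟩ := hEven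
    omega
  have hn1 : 1 ≤ n := by omega
  have hm0 : (m:ℝ) ≠ 0 := Nat.cast_ne_zero.2 (by omega)
  have hmr : (m:ℝ) = 2*(n:ℝ) := by exact_mod_cast congrArg (fun x : ℕ => (x:ℝ)) hn2
  have hterm : ∀ k ∈ Finset.range (m+1),
      (m.choose k : ℝ) * (1/2:ℝ)^k * (1 - 1/2)^(m-k) * |1/2 - (k:ℝ)/m|
      = ((1/2:ℝ)^m / m) * ((m.choose k : ℝ) * |(n:ℝ) - k|) := by
    intro k hk
    have hk' : k ≤ m := by
      have := Finset.mem_range.1 hk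
      omega
    have hpow : (1/2:ℝ)^k * (1 - 1/2)^(m-k) = (1/2)^m := by
      norm_num
      rw [← pow_add]
      congr 1
      omega
    have habs : |1/2 - (k:ℝ)/m| = |(n:ℝ) - k| / m := by
      have e : (1/2 : ℝ) - (k:ℝ)/m = ((n:ℝ) - k)/m := by
        rw [hmr]
        have : (n:ℝ) ≠ 0 := by
          simp only [ne_eq, Nat.cast_eq_zero]
          omega
        field_simp
      rw [e, abs_div, abs_of_nonneg (by positivity : (0:ℝ) ≤ (m:ℝ))]
    rw [habs, show (m.choose k : ℝ) * (1/2:ℝ)^k * (1 - 1/2)^(m-k)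
      = (m.choose k:ℝ) * (1/2:ℝ)^m from by rw [mul_assoc, hpow]]
    ring
  rw [Finset.sum_congr rfl hterm, ← Finset.mul_sum, hn2]
  rw [P2c n hn1]
  have hfact := Nat.choose_mul_factorial_mul_factorial (show n ≤ 2*n by omega)
  rw [show 2*n - n = n from by omega] at hfact
  have hf : ((2*n).choose n : ℝ) * (n.factorial:ℝ) * (n.factorial:ℝ)
      = ((2*n).factorial : ℝ) := by exact_mod_cast congrArg (fun x : ℕ => (x:ℝ)) hfact
  have hfne : (n.factorial : ℝ) ≠ 0 := Nat.cast_ne_zero.2 (Nat.factorial_ne_zero n)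
  have hnne : ((2*n : ℕ):ℝ) ≠ 0 := by
    simp only [ne_eq, Nat.cast_eq_zero]
    omega
  rw [← hf]
  push_cast
  have hnne' : (n:ℝ) ≠ 0 := by
    simp only [ne_eq, Nat.cast_eq_zero]
    omega
  field_simp
  have hhalf : (1/2:ℝ)^(2*n) * 2^(2*n) = 1 := by rw [← mul_pow]; norm_num
  rw [pow_succ]
  linear_combination (((2*n).choose n : ℝ) * 2) * hhalf
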